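/- For a stationary irreducible Markov chain with invariant probability vector π (all entries positive) and transition matrix P on a finite state space 𝒜, the entropy production with θ = id equals ep(ℙ) = ∑_{a,b∈𝒜} ½(π_a P_{a,b} − π_b P_{b,a}) log(π_a P_{a,b} / (π_b P_{b,a})), and ep(ℙ) = 0 if and only if detailed balance π_a P_{a,b} = π_b P_{b,a} holds for all a, b. -/

import Mathlib

open Filter

noncomputable def markovW {𝒜 : Type*} (π : 𝒜 → ℝ) (P : Matrix 𝒜 𝒜 ℝ) :
    (n : ℕ) → (Fin n → 𝒜) → ℝ
  | 0, _ => 1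
  | n + 1, a => π (a 0) * ∏ i : Fin n, P (a i.castSucc) (a i.succ)

section Aux

variable {𝒜 : Type*} [Fintype 𝒜] [DecidableEq 𝒜]
variable (π : 𝒜 → ℝ) (P : Matrix 𝒜 𝒜 ℝ)

lemma markovW_succ (n : ℕ) (a : Fin (n+1) → 𝒜) :
    markovW π P (n+1) a = π (a 0) * ∏ i : Fin n, P (a i.castSucc) (a i.succ) := rfl

lemma markovW_rev (n : ℕ) (a : Fin (n+1) → 𝒜) :
    markovW π P (n+1) (fun i => a i.rev) =
      π (a (Fin.last n)) * ∏ i : Fin n, P (a i.succ) (a i.castSucc) := by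
  rw [markovW_succ]
  simp only [Fin.rev_zero, Fin.rev_castSucc, Fin.rev_succ]
  congr 1
  exact Equiv.prod_comp Fin.revPerm (fun i : Fin n => P (a i.succ) (a i.castSucc))

lemma markovW_nonneg (hπpos : ∀ a, 0 < π a) (hPnonneg : ∀ a b, 0 ≤ P a b) :
    ∀ (n : ℕ) (a : Fin n → 𝒜), 0 ≤ markovW π P n a
  | 0, _ => zero_le_one
  | _ + 1, _ => mul_nonneg (hπpos _).le (Finset.prod_nonneg fun _ _ => hPnonneg _ _)

lemma markovW_pos_iff (hπpos : ∀ a, 0 < π a) (hPnonneg : ∀ a b, 0 ≤ P a b)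
    (n : ℕ) (a : Fin (n+1) → 𝒜) :
    0 < markovW π P (n+1) a ↔ ∀ i : Fin n, 0 < P (a i.castSucc) (a i.succ) := by
  rw [markovW_succ]
  constructor
  · intro h i
    rcases (hPnonneg (a i.castSucc) (a i.succ)).lt_or_eq with h' | h'
    · exact h'
    · exfalso
      rw [Finset.prod_eq_zero (Finset.mem_univ i) h'.symm, mul_zero] at h
      exact lt_irrefl 0 h
  · intro h
    exact mul_pos (hπpos _) (Finset.prod_pos fun i _ => h i)

lemma markovW_rev_pos (hπpos : ∀ a, 0 < π a) (hPnonneg : ∀ a b, 0 ≤ P a b)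
    (hzero : ∀ a b, 0 < π a * P a b ↔ 0 < π b * P b a)
    (n : ℕ) (a : Fin (n+1) → 𝒜) (h : 0 < markovW π P (n+1) a) :
    0 < markovW π P (n+1) (fun i => a i.rev) := by
  rw [markovW_rev]
  refine mul_pos (hπpos _) (Finset.prod_pos fun i _ => ?_)
  have h1 := (markovW_pos_iff π P hπpos hPnonneg n a).1 h i
  have h2 : 0 < π (a i.castSucc) * P (a i.castSucc) (a i.succ) := mul_pos (hπpos _) h1
  have h3 := (hzero _ _).1 h2
  have h4 := hπpos (a i.succ)
  nlinarith [hPnonneg (a i.succ) (a i.castSucc)]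

lemma markovW_snoc (n : ℕ) (b : Fin (n+1) → 𝒜) (y : 𝒜) :
    markovW π P (n+2) (Fin.snoc b y) = markovW π P (n+1) b * P (b (Fin.last n)) y := by
  rw [markovW_succ, markovW_succ, Fin.prod_univ_castSucc]
  have h0 : (Fin.snoc b y : Fin (n+2) → 𝒜) 0 = b 0 := by
    show (Fin.snoc b y : Fin (n+2) → 𝒜) (Fin.castSucc 0) = b 0
    rw [Fin.snoc_castSucc]
  rw [h0]
  have h1 : ∀ j : Fin n,
      P ((Fin.snoc b y : Fin (n+2) → 𝒜) j.castSucc.castSucc)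
        ((Fin.snoc b y : Fin (n+2) → 𝒜) j.castSucc.succ)
        = P (b j.castSucc) (b j.succ) := by
    intro j
    rw [Fin.succ_castSucc, Fin.snoc_castSucc, Fin.snoc_castSucc]
  rw [Finset.prod_congr rfl (fun j _ => h1 j)]
  have h2 : P ((Fin.snoc b y : Fin (n+2) → 𝒜) (Fin.last n).castSucc)
      ((Fin.snoc b y : Fin (n+2) → 𝒜) (Fin.last n).succ) = P (b (Fin.last n)) y := by
    rw [Fin.succ_last, Fin.snoc_castSucc, Fin.snoc_last]
  rw [h2]
  ring

lemma markovW_rev_snoc (n : ℕ) (b : Fin (n+1) → 𝒜) (y : 𝒜) :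
    π (b (Fin.last n)) *
        markovW π P (n+2) (fun i => (Fin.snoc b y : Fin (n+2) → 𝒜) i.rev)
      = π y * P y (b (Fin.last n)) * markovW π P (n+1) (fun i => b i.rev) := by
  rw [markovW_rev, markovW_rev, Fin.prod_univ_castSucc]
  have h1 : ∀ j : Fin n,
      P ((Fin.snoc b y : Fin (n+2) → 𝒜) j.castSucc.succ)
        ((Fin.snoc b y : Fin (n+2) → 𝒜) j.castSucc.castSucc)
        = P (b j.succ) (b j.castSucc) := by
    intro j
    rw [Fin.succ_castSucc, Fin.snoc_castSucc, Fin.snoc_castSucc]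
  rw [Finset.prod_congr rfl (fun j _ => h1 j)]
  have h2 : P ((Fin.snoc b y : Fin (n+2) → 𝒜) (Fin.last n).succ)
      ((Fin.snoc b y : Fin (n+2) → 𝒜) (Fin.last n).castSucc) = P y (b (Fin.last n)) := by
    rw [Fin.succ_last, Fin.snoc_castSucc, Fin.snoc_last]
  have h3 : (Fin.snoc b y : Fin (n+2) → 𝒜) (Fin.last (n+1)) = y := Fin.snoc_last _ _
  rw [h2, h3]
  ring

def snocEquiv (𝒜 : Type*) (n : ℕ) : ((Fin (n+1) → 𝒜) × 𝒜) ≃ (Fin (n+2) → 𝒜) where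
  toFun p := Fin.snoc p.1 p.2
  invFun a := (fun i => a i.castSucc, a (Fin.last (n+1)))
  left_inv p := by
    obtain ⟨b, y⟩ := p
    refine Prod.ext ?_ ?_
    · funext i
      show (Fin.snoc b y : Fin (n+2) → 𝒜) i.castSucc = b i
      rw [Fin.snoc_castSucc]
    · show (Fin.snoc b y : Fin (n+2) → 𝒜) (Fin.last (n+1)) = y
      rw [Fin.snoc_last]
  right_inv a := Fin.snoc_init_self a



lemma markov_marginal (hstat : ∀ b, ∑ a, π a * P a b = π b) :
    ∀ (n : ℕ) (g : 𝒜 → ℝ),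
      ∑ b : Fin (n+1) → 𝒜, markovW π P (n+1) b * g (b (Fin.last n)) = ∑ x, π x * g x := by
  intro n
  induction n with
  | zero =>
    intro g
    rw [← Equiv.sum_comp (Equiv.funUnique (Fin 1) 𝒜).symm
      (fun b : Fin 1 → 𝒜 => markovW π P 1 b * g (b (Fin.last 0)))]
    refine Finset.sum_congr rfl fun x _ => ?_
    simp [markovW, Equiv.funUnique]
  | succ n ih =>
    intro g
    rw [← Equiv.sum_comp (snocEquiv 𝒜 n)
      (fun b : Fin (n+2) → 𝒜 => markovW π P (n+2) b * g (b (Fin.last (n+1)))),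
      Fintype.sum_prod_type]
    have key : ∀ (b : Fin (n+1) → 𝒜),
        (∑ y, markovW π P (n+2) (snocEquiv 𝒜 n (b, y)) *
            g ((snocEquiv 𝒜 n (b, y)) (Fin.last (n+1))))
          = markovW π P (n+1) b * (fun x => ∑ y, P x y * g y) (b (Fin.last n)) := by
      intro b
      have : ∀ y : 𝒜,
          markovW π P (n+2) (snocEquiv 𝒜 n (b, y)) *
              g ((snocEquiv 𝒜 n (b, y)) (Fin.last (n+1)))
            = markovW π P (n+1) b * (P (b (Fin.last n)) y * g y) := by
        intro y
        show markovW π P (n+2) (Fin.snoc b y) *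
            g ((Fin.snoc b y : Fin (n+2) → 𝒜) (Fin.last (n+1))) = _
        rw [markovW_snoc, Fin.snoc_last]
        ring
      rw [Finset.sum_congr rfl fun y _ => this y, ← Finset.mul_sum]
    rw [Finset.sum_congr rfl fun b _ => key b, ih (fun x => ∑ y, P x y * g y)]
    have : ∀ x, π x * ∑ y, P x y * g y = ∑ y, π x * P x y * g y := by
      intro x
      rw [Finset.mul_sum]
      exact Finset.sum_congr rfl fun y _ => by ring
    rw [Finset.sum_congr rfl fun x _ => this x, Finset.sum_comm]
    refine Finset.sum_congr rfl fun y _ => ?_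
    rw [← Finset.sum_mul, hstat]

lemma markov_term_snoc (hπpos : ∀ a, 0 < π a) (hPnonneg : ∀ a b, 0 ≤ P a b)
    (hzero : ∀ a b, 0 < π a * P a b ↔ 0 < π b * P b a)
    (n : ℕ) (b : Fin (n+1) → 𝒜) (y : 𝒜) :
    markovW π P (n+2) (Fin.snoc b y) *
        Real.log (markovW π P (n+2) (Fin.snoc b y) /
          markovW π P (n+2) (fun i => (Fin.snoc b y : Fin (n+2) → 𝒜) i.rev))
      = markovW π P (n+1) b * P (b (Fin.last n)) y *
          (Real.log (markovW π P (n+1) b / markovW π P (n+1) (fun i => b i.rev))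
            + Real.log (π (b (Fin.last n)) * P (b (Fin.last n)) y /
                (π y * P y (b (Fin.last n))))) := by
  have hsnoc := markovW_snoc π P n b y
  have hrev := markovW_rev_snoc π P n b y
  set x := b (Fin.last n) with hx
  set w := markovW π P (n+1) b with hw
  set wr := markovW π P (n+1) (fun i => b i.rev) with hwr
  by_cases h : 0 < w * P x y
  · have hw0 : 0 ≤ w := markovW_nonneg π P hπpos hPnonneg _ b
    have hp0 : 0 ≤ P x y := hPnonneg x y
    have hwpos : 0 < w := by
      rcases mul_pos_iff.mp h with ⟨h1, _⟩ | ⟨h1, _⟩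
      · exact h1
      · linarith
    have hPpos : 0 < P x y := by
      rcases mul_pos_iff.mp h with ⟨_, h2⟩ | ⟨_, h2⟩
      · exact h2
      · linarith
    have hwrpos : 0 < wr := markovW_rev_pos π P hπpos hPnonneg hzero n b hwpos
    have hu : 0 < π x * P x y := mul_pos (hπpos x) hPpos
    have hv : 0 < π y * P y x := (hzero x y).1 hu
    have hπx : π x ≠ 0 := (hπpos x).ne'
    have hWrev : markovW π P (n+2) (fun i => (Fin.snoc b y : Fin (n+2) → 𝒜) i.rev)
        = π y * P y x * wr / π x := by
      rw [eq_div_iff hπx]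
      linarith [hrev]
    rw [hsnoc, hWrev]
    congr 1
    have harg : w * P x y / (π y * P y x * wr / π x)
        = (w / wr) * ((π x * P x y) / (π y * P y x)) := by
      field_simp
    rw [harg, Real.log_mul (div_pos hwpos hwrpos).ne' (div_pos hu hv).ne']
  · have h0 : w * P x y = 0 :=
      le_antisymm (not_lt.mp h)
        (mul_nonneg (markovW_nonneg π P hπpos hPnonneg _ b) (hPnonneg x y))
    rw [hsnoc, h0, zero_mul, zero_mul]

lemma markov_S (hπpos : ∀ a, 0 < π a) (hPnonneg : ∀ a b, 0 ≤ P a b)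
    (hPstoch : ∀ a, ∑ b, P a b = 1) (hstat : ∀ b, ∑ a, π a * P a b = π b)
    (hzero : ∀ a b, 0 < π a * P a b ↔ 0 < π b * P b a) :
    ∀ n : ℕ,
      (∑ a : Fin (n+1) → 𝒜, markovW π P (n+1) a *
          Real.log (markovW π P (n+1) a / markovW π P (n+1) (fun i => a i.rev)))
        = n * ∑ x, ∑ y, π x * P x y * Real.log (π x * P x y / (π y * P y x)) := by
  intro n
  induction n with
  | zero =>
    rw [Nat.cast_zero, zero_mul]
    refine Finset.sum_eq_zero fun a _ => ?_
    have hrev : (fun i : Fin 1 => a i.rev) = a := by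
      funext i
      congr 1
      omega
    have hpos : 0 < markovW π P 1 a :=
      (markovW_pos_iff π P hπpos hPnonneg 0 a).2 fun i => i.elim0
    rw [hrev, div_self hpos.ne', Real.log_one, mul_zero]
  | succ n ih =>
    rw [← Equiv.sum_comp (snocEquiv 𝒜 n)
      (fun a : Fin (n+2) → 𝒜 => markovW π P (n+2) a *
        Real.log (markovW π P (n+2) a / markovW π P (n+2) (fun i => a i.rev))),
      Fintype.sum_prod_type]
    have key : ∀ b : Fin (n+1) → 𝒜,
        (∑ y, markovW π P (n+2) (snocEquiv 𝒜 n (b, y)) *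
            Real.log (markovW π P (n+2) (snocEquiv 𝒜 n (b, y)) /
              markovW π P (n+2) (fun i => (snocEquiv 𝒜 n (b, y)) i.rev)))
          = markovW π P (n+1) b *
              Real.log (markovW π P (n+1) b / markovW π P (n+1) (fun i => b i.rev))
            + markovW π P (n+1) b *
              (fun x => ∑ y, P x y * Real.log (π x * P x y / (π y * P y x)))
                (b (Fin.last n)) := by
      intro b
      have hterm : ∀ y : 𝒜,
          markovW π P (n+2) (snocEquiv 𝒜 n (b, y)) *
              Real.log (markovW π P (n+2) (snocEquiv 𝒜 n (b, y)) /
                markovW π P (n+2) (fun i => (snocEquiv 𝒜 n (b, y)) i.rev))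
            = markovW π P (n+1) b *
                Real.log (markovW π P (n+1) b / markovW π P (n+1) (fun i => b i.rev))
                  * P (b (Fin.last n)) y
              + markovW π P (n+1) b *
                  (P (b (Fin.last n)) y *
                    Real.log (π (b (Fin.last n)) * P (b (Fin.last n)) y /
                      (π y * P y (b (Fin.last n))))) := by
        intro y
        have := markov_term_snoc π P hπpos hPnonneg hzero n b y
        show markovW π P (n+2) (Fin.snoc b y) *
            Real.log (markovW π P (n+2) (Fin.snoc b y) /
              markovW π P (n+2) (fun i => (Fin.snoc b y : Fin (n+2) → 𝒜) i.rev)) = _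
        rw [this]
        ring
      rw [Finset.sum_congr rfl fun y _ => hterm y, Finset.sum_add_distrib,
        ← Finset.mul_sum, ← Finset.mul_sum, hPstoch, mul_one]
    rw [Finset.sum_congr rfl fun b _ => key b, Finset.sum_add_distrib, ih,
      markov_marginal π P hstat n
        (fun x => ∑ y, P x y * Real.log (π x * P x y / (π y * P y x)))]
    have : (∑ x, π x * ∑ y, P x y * Real.log (π x * P x y / (π y * P y x)))
        = ∑ x, ∑ y, π x * P x y * Real.log (π x * P x y / (π y * P y x)) := by
      refine Finset.sum_congr rfl fun x _ => ?_
      rw [Finset.mul_sum]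
      exact Finset.sum_congr rfl fun y _ => by ring
    rw [this]
    push_cast
    ring

lemma markov_skew (hπpos : ∀ a, 0 < π a) (hPnonneg : ∀ a b, 0 ≤ P a b)
    (hzero : ∀ a b, 0 < π a * P a b ↔ 0 < π b * P b a) (a b : 𝒜) :
    π a * P a b * Real.log (π b * P b a / (π a * P a b))
      = -(π a * P a b * Real.log (π a * P a b / (π b * P b a))) := by
  by_cases h : 0 < π a * P a b
  · rw [show π b * P b a / (π a * P a b) = (π a * P a b / (π b * P b a))⁻¹ from
      (inv_div _ _).symm, Real.log_inv]
    ring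
  · have h0 : π a * P a b = 0 :=
      le_antisymm (not_lt.mp h) (mul_nonneg (hπpos a).le (hPnonneg a b))
    rw [h0, zero_mul, zero_mul, neg_zero]

lemma markov_T_eq (hπpos : ∀ a, 0 < π a) (hPnonneg : ∀ a b, 0 ≤ P a b)
    (hzero : ∀ a b, 0 < π a * P a b ↔ 0 < π b * P b a) :
    (∑ a, ∑ b, (π a * P a b - π b * P b a) / 2 *
        Real.log (π a * P a b / (π b * P b a)))
      = ∑ x, ∑ y, π x * P x y * Real.log (π x * P x y / (π y * P y x)) := by
  have key : ∀ a b : 𝒜, (π a * P a b - π b * P b a) / 2 *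
      Real.log (π a * P a b / (π b * P b a))
        = (π a * P a b * Real.log (π a * P a b / (π b * P b a))) / 2
          - (π b * P b a * Real.log (π a * P a b / (π b * P b a))) / 2 := by
    intro a b; ring
  simp_rw [key, Finset.sum_sub_distrib, ← Finset.sum_div]
  have h2 : (∑ a, ∑ b, π b * P b a * Real.log (π a * P a b / (π b * P b a)))
      = -∑ x, ∑ y, π x * P x y * Real.log (π x * P x y / (π y * P y x)) := by
    rw [Finset.sum_comm, ← Finset.sum_neg_distrib]
    refine Finset.sum_congr rfl fun x _ => ?_
    rw [← Finset.sum_neg_distrib]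
    refine Finset.sum_congr rfl fun y _ => ?_
    exact markov_skew π P hπpos hPnonneg hzero x y
  rw [h2]
  ring

lemma markov_term_nonneg (hπpos : ∀ a, 0 < π a) (hPnonneg : ∀ a b, 0 ≤ P a b)
    (hzero : ∀ a b, 0 < π a * P a b ↔ 0 < π b * P b a) (a b : 𝒜) :
    0 ≤ (π a * P a b - π b * P b a) / 2 *
      Real.log (π a * P a b / (π b * P b a)) := by
  by_cases hu : 0 < π a * P a b
  · have hv : 0 < π b * P b a := (hzero a b).1 hu
    rcases le_or_gt (π b * P b a) (π a * P a b) with hle | hlt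
    · refine mul_nonneg (by linarith) (Real.log_nonneg ?_)
      rw [le_div_iff₀ hv]
      linarith
    · have hlog : Real.log (π a * P a b / (π b * P b a)) ≤ 0 := by
        refine Real.log_nonpos (by positivity) ?_
        rw [div_le_one hv]
        linarith
      have := mul_nonneg (neg_nonneg.2 (show (π a * P a b - π b * P b a) / 2 ≤ 0 by linarith))
        (neg_nonneg.2 hlog)
      nlinarith
  · have hu0 : π a * P a b = 0 :=
      le_antisymm (not_lt.mp hu) (mul_nonneg (hπpos a).le (hPnonneg a b))
    have hv0 : π b * P b a = 0 :=
      le_antisymm (not_lt.mp fun h => hu ((hzero a b).2 h))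
        (mul_nonneg (hπpos b).le (hPnonneg b a))
    rw [hu0, hv0, sub_zero, zero_div, zero_mul]

lemma markov_term_eq_zero (hπpos : ∀ a, 0 < π a) (hPnonneg : ∀ a b, 0 ≤ P a b)
    (hzero : ∀ a b, 0 < π a * P a b ↔ 0 < π b * P b a) (a b : 𝒜) :
    (π a * P a b - π b * P b a) / 2 * Real.log (π a * P a b / (π b * P b a)) = 0
      ↔ π a * P a b = π b * P b a := by
  by_cases hu : 0 < π a * P a b
  · have hv : 0 < π b * P b a := (hzero a b).1 hu
    constructor
    · intro h
      rcases mul_eq_zero.mp h with h' | h'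
      · have : π a * P a b - π b * P b a = 0 := by linarith [div_eq_zero_iff.mp h']
        linarith
      · rcases Real.log_eq_zero.mp h' with h'' | h'' | h''
        · exact absurd h'' (div_pos hu hv).ne'
        · exact (div_eq_one_iff_eq hv.ne').mp h''
        · nlinarith [div_pos hu hv]
    · intro h
      rw [h, sub_self, zero_div, zero_mul]
  · have hu0 : π a * P a b = 0 :=
      le_antisymm (not_lt.mp hu) (mul_nonneg (hπpos a).le (hPnonneg a b))
    have hv0 : π b * P b a = 0 :=
      le_antisymm (not_lt.mp fun h => hu ((hzero a b).2 h))
        (mul_nonneg (hπpos b).le (hPnonneg b a))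
    simp [hu0, hv0]

end Aux

/-- For a stationary irreducible Markov chain with invariant probability vector `π`
(all entries positive) and transition matrix `P`, the entropy production with `θ = id`
equals `∑_{a,b} ½(π_a P_{a,b} − π_b P_{b,a}) log(π_a P_{a,b}/(π_b P_{b,a}))`, and it
vanishes iff detailed balance holds. -/
theorem markov_entropy_production {𝒜 : Type*} [Fintype 𝒜] [DecidableEq 𝒜] [Nonempty 𝒜]
    (π : 𝒜 → ℝ) (P : Matrix 𝒜 𝒜 ℝ)
    (hπpos : ∀ a, 0 < π a) (hπsum : ∑ a, π a = 1)
    (hPnonneg : ∀ a b, 0 ≤ P a b) (hPstoch : ∀ a, ∑ b, P a b = 1)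
    (hstat : ∀ b, ∑ a, π a * P a b = π b)
    (hirr : ∀ a b, ∃ k : ℕ, 0 < (P ^ k) a b)
    (hzero : ∀ a b, 0 < π a * P a b ↔ 0 < π b * P b a) :
    Tendsto
        (fun n : ℕ =>
          (∑ a : Fin n → 𝒜,
              markovW π P n a *
                Real.log (markovW π P n a / markovW π P n (fun i => a i.rev))) / n)
        atTop
        (nhds (∑ a, ∑ b,
          (π a * P a b - π b * P b a) / 2 * Real.log (π a * P a b / (π b * P b a)))) ∧
      ((∑ a, ∑ b,
          (π a * P a b - π b * P b a) / 2 * Real.log (π a * P a b / (π b * P b a))) = 0 ↔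
        ∀ a b, π a * P a b = π b * P b a) := by
  have hTeq := markov_T_eq π P hπpos hPnonneg hzero
  constructor
  · rw [hTeq]
    have hS := markov_S π P hπpos hPnonneg hPstoch hstat hzero
    set T := ∑ x, ∑ y, π x * P x y * Real.log (π x * P x y / (π y * P y x)) with hT
    have hfun : ∀ n : ℕ,
        (∑ a : Fin n → 𝒜, markovW π P n a *
            Real.log (markovW π P n a / markovW π P n (fun i => a i.rev))) / n
          = ((n : ℝ) - 1) / n * T := by
      intro n
      cases n with
      | zero => simp [markovW]
      | succ m =>
        rw [hS m]
        push_cast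
        rw [add_sub_cancel_right, div_mul_eq_mul_div]
    have h0 : Tendsto (fun n : ℕ => 1 / (n : ℝ)) atTop (nhds 0) := tendsto_one_div_atTop_nhds_zero_nat
    have h1 : Tendsto (fun n : ℕ => 1 - 1 / (n : ℝ)) atTop (nhds (1 - 0)) :=
      tendsto_const_nhds.sub h0
    rw [sub_zero] at h1
    have heq : (fun n : ℕ => 1 - 1 / (n : ℝ)) =ᶠ[atTop] fun n : ℕ => ((n : ℝ) - 1) / n := by
      filter_upwards [eventually_ge_atTop 1] with n hn
      have hn0 : (n : ℝ) ≠ 0 := Nat.cast_ne_zero.mpr (by omega)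
      field_simp
    have h2 : Tendsto (fun n : ℕ => ((n : ℝ) - 1) / n) atTop (nhds 1) :=
      Filter.Tendsto.congr' heq h1
    have h3 := h2.mul_const T
    rw [one_mul] at h3
    exact Filter.Tendsto.congr (fun n => (hfun n).symm) h3
  · rw [Finset.sum_eq_zero_iff_of_nonneg
      (fun a _ => Finset.sum_nonneg fun b _ =>
        markov_term_nonneg π P hπpos hPnonneg hzero a b)]
    constructor
    · intro h a b
      have hb := (Finset.sum_eq_zero_iff_of_nonneg
          (fun b _ => markov_term_nonneg π P hπpos hPnonneg hzero a b)).1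
        (h a (Finset.mem_univ a)) b (Finset.mem_univ b)
      exact (markov_term_eq_zero π P hπpos hPnonneg hzero a b).1 hb
    · intro h a _
      exact Finset.sum_eq_zero fun b _ =>
        (markov_term_eq_zero π P hπpos hPnonneg hzero a b).2 (h a b)
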